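/- Composition along a common boundary of nets with boundaries is associative up to isomorphism: for all nets with boundaries M : k → l, N : l → m, O : m → n, one has (M ; N) ; O ≅ M ; (N ; O). -/

import Mathlib

/-! Core definitions: nets with boundaries (Sobocinski et al.),
composition, tensor, isomorphism, step firing semantics, ports,
connections, networks, bases, wiring expressions and decompositions. -/

namespace NWB

/-- A net with boundaries `N : k → l` (without the contention axioms,
which are packaged separately in `IsContention`). -/
structure NetB (k l : ℕ) : Type 1 where
  P : Type
  T : Type
  finP : Finite P
  finT : Finite T
  pre : T → Set P
  post : T → Set P
  src : T → Set (Fin k)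
  tgt : T → Set (Fin l)
  con : T → T → Prop

/-- The contention relation axioms: reflexive, symmetric, and forced whenever
two transitions share a pre-place, post-place, or boundary port. -/
def IsContention {k l : ℕ} (N : NetB k l) : Prop :=
  (∀ t, N.con t t) ∧ (∀ t u, N.con t u → N.con u t) ∧
  (∀ t u,
    ((N.pre t ∩ N.pre u).Nonempty ∨ (N.post t ∩ N.post u).Nonempty ∨
     (N.src t ∩ N.src u).Nonempty ∨ (N.tgt t ∩ N.tgt u).Nonempty) → N.con t u)

def setPre {k l : ℕ} (N : NetB k l) (U : Set N.T) : Set N.P := ⋃ u ∈ U, N.pre u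
def setPost {k l : ℕ} (N : NetB k l) (U : Set N.T) : Set N.P := ⋃ u ∈ U, N.post u
def setSrc {k l : ℕ} (N : NetB k l) (U : Set N.T) : Set (Fin k) := ⋃ u ∈ U, N.src u
def setTgt {k l : ℕ} (N : NetB k l) (U : Set N.T) : Set (Fin l) := ⋃ u ∈ U, N.tgt u

/-- Mutually independent set of transitions: no two distinct members in contention. -/
def MI {k l : ℕ} (N : NetB k l) (U : Set N.T) : Prop :=
  ∀ u ∈ U, ∀ v ∈ U, N.con u v → u = v

/-- Contention lifted to sets of transitions. -/
def setCon {k l : ℕ} (N : NetB k l) (U V : Set N.T) : Prop :=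
  ∃ u ∈ U, ∃ v ∈ V, N.con u v

/-- A synchronisation between `M : l → m` and `N : m → n`. -/
structure Sync {l m n : ℕ} (M : NetB l m) (N : NetB m n) where
  U : Set M.T
  V : Set N.T
  miU : MI M U
  miV : MI N V
  bd : setTgt M U = setSrc N V

def Sync.Trivial {l m n : ℕ} {M : NetB l m} {N : NetB m n} (s : Sync M N) : Prop :=
  s.U = ∅ ∧ s.V = ∅

/-- A minimal synchronisation: non-trivial, and every componentwise-smaller
synchronisation is trivial or equal to it. -/
def Sync.Minimal {l m n : ℕ} {M : NetB l m} {N : NetB m n} (s : Sync M N) : Prop :=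
  ¬ s.Trivial ∧
  ∀ s' : Sync M N, s'.U ⊆ s.U → s'.V ⊆ s.V → (s'.Trivial ∨ (s'.U = s.U ∧ s'.V = s.V))

theorem sync_finite {l m n : ℕ} (M : NetB l m) (N : NetB m n) : Finite (Sync M N) := by
  haveI := M.finT; haveI := N.finT
  apply Finite.of_injective (fun s : Sync M N => (s.U, s.V))
  intro s s' h
  simp only [Prod.mk.injEq] at h
  obtain ⟨h1, h2⟩ := h
  cases s; cases s'
  simp_all

/-- Composition along a common boundary. -/
def comp {l m n : ℕ} (M : NetB l m) (N : NetB m n) : NetB l n where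
  P := M.P ⊕ N.P
  T := {s : Sync M N // s.Minimal}
  finP := by haveI := M.finP; haveI := N.finP; exact inferInstance
  finT := by haveI := sync_finite M N; exact inferInstance
  pre s := (Sum.inl '' setPre M s.1.U) ∪ (Sum.inr '' setPre N s.1.V)
  post s := (Sum.inl '' setPost M s.1.U) ∪ (Sum.inr '' setPost N s.1.V)
  src s := setSrc M s.1.U
  tgt s := setTgt N s.1.V
  con s s' := setCon M s.1.U s'.1.U ∨ setCon N s.1.V s'.1.V

/-- Tensor product of nets with boundaries. -/
def tensor {l m k n : ℕ} (M : NetB l m) (N : NetB k n) : NetB (l + k) (m + n) where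
  P := M.P ⊕ N.P
  T := M.T ⊕ N.T
  finP := by haveI := M.finP; haveI := N.finP; exact inferInstance
  finT := by haveI := M.finT; haveI := N.finT; exact inferInstance
  pre t := match t with
    | Sum.inl t => Sum.inl '' M.pre t
    | Sum.inr t => Sum.inr '' N.pre t
  post t := match t with
    | Sum.inl t => Sum.inl '' M.post t
    | Sum.inr t => Sum.inr '' N.post t
  src t := match t with
    | Sum.inl t => Fin.castAdd k '' M.src t
    | Sum.inr t => Fin.natAdd l '' N.src t
  tgt t := match t with
    | Sum.inl t => Fin.castAdd n '' M.tgt t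
    | Sum.inr t => Fin.natAdd m '' N.tgt t
  con t u := match t, u with
    | Sum.inl t, Sum.inl u => M.con t u
    | Sum.inr t, Sum.inr u => N.con t u
    | _, _ => False

/-- Isomorphism of nets with boundaries: bijections on places and transitions
preserving pre-sets, post-sets, boundary maps and contention. -/
structure NetIso {k l : ℕ} (M N : NetB k l) where
  ep : M.P ≃ N.P
  et : M.T ≃ N.T
  pre_eq : ∀ t, N.pre (et t) = ep '' M.pre t
  post_eq : ∀ t, N.post (et t) = ep '' M.post t
  src_eq : ∀ t, N.src (et t) = M.src t
  tgt_eq : ∀ t, N.tgt (et t) = M.tgt t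
  con_iff : ∀ t u, N.con (et t) (et u) ↔ M.con t u

def Iso {k l : ℕ} (M N : NetB k l) : Prop := Nonempty (NetIso M N)

/-- Transport a net along equalities of its boundary sizes. -/
def castNet {k l k' l' : ℕ} (h1 : k = k') (h2 : l = l') (N : NetB k l) : NetB k' l' where
  P := N.P
  T := N.T
  finP := N.finP
  finT := N.finT
  pre := N.pre
  post := N.post
  src t := Fin.cast h1 '' N.src t
  tgt t := Fin.cast h2 '' N.tgt t
  con := N.con

def emptyNet : NetB 0 0 where
  P := Empty
  T := Empty
  finP := inferInstance
  finT := inferInstance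
  pre t := t.elim
  post t := t.elim
  src t := t.elim
  tgt t := t.elim
  con t _ := t.elim

/-- The step firing semantics: `Fires N X X' α β` iff the LTS `⟦N⟧` has a
transition `X →⟨α,β⟩ X'`. -/
def Fires {k l : ℕ} (N : NetB k l) (X X' : Set N.P) (α : Set (Fin k)) (β : Set (Fin l)) :
    Prop :=
  ∃ U : Set N.T, MI N U ∧ setPre N U ⊆ X ∧ setPost N U ∩ X = ∅ ∧
    X' = (X \ setPre N U) ∪ setPost N U ∧ setSrc N U = α ∧ setTgt N U = β

/-! ### Ports, connections and networks -/

/-- The ports of a net: an in-port and an out-port for each place,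
together with the left and right boundary ports. -/
def Port {k l : ℕ} (N : NetB k l) : Type := (N.P ⊕ N.P) ⊕ (Fin k ⊕ Fin l)

def portIn {k l : ℕ} {N : NetB k l} (p : N.P) : Port N := Sum.inl (Sum.inl p)
def portOut {k l : ℕ} {N : NetB k l} (p : N.P) : Port N := Sum.inl (Sum.inr p)
def bLeft {k l : ℕ} {N : NetB k l} (i : Fin k) : Port N := Sum.inr (Sum.inl i)
def bRight {k l : ℕ} {N : NetB k l} (j : Fin l) : Port N := Sum.inr (Sum.inr j)

/-- The portset of a transition. -/
def tports {k l : ℕ} (N : NetB k l) (t : N.T) : Set (Port N) :=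
  (portOut '' N.pre t) ∪ (portIn '' N.post t) ∪ (bLeft '' N.src t) ∪ (bRight '' N.tgt t)

/-- The connection of a port `q`: the portsets (minus `q`) of all transitions
properly connecting to `q`. -/
def conn {k l : ℕ} (N : NetB k l) (q : Port N) : Set (Set (Port N)) :=
  { K | ∃ t : N.T, {q} ⊂ tports N t ∧ K = tports N t \ {q} }

/-- The connection of `q` restricted to a set `R` of ports. -/
def connR {k l : ℕ} (N : NetB k l) (R : Set (Port N)) (q : Port N) :
    Set (Set (Port N)) :=
  { K' | ∃ K ∈ conn N q, (K ∩ R).Nonempty ∧ K' = K ∩ R }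

/-- Extended ports of the left part of an oriented partition. -/
def eportsL {k l : ℕ} (N : NetB k l) (Pl : Set N.P) : Set (Port N) :=
  (portIn '' Pl) ∪ (portOut '' Pl) ∪ Set.range (bLeft (N := N))

/-- Extended ports of the right part of an oriented partition. -/
def eportsR {k l : ℕ} (N : NetB k l) (Pr : Set N.P) : Set (Port N) :=
  (portIn '' Pr) ∪ (portOut '' Pr) ∪ Set.range (bRight (N := N))

/-- The network `net(P_l → P_r)`. -/
def networkLR {k l : ℕ} (N : NetB k l) (Pl Pr : Set N.P) :
    Set (Set (Set (Port N))) :=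
  { c | ∃ q ∈ eportsL N Pl, c = connR N (eportsR N Pr) q }

/-- The network `net(P_r → P_l)`. -/
def networkRL {k l : ℕ} (N : NetB k l) (Pl Pr : Set N.P) :
    Set (Set (Set (Port N))) :=
  { c | ∃ q ∈ eportsR N Pr, c = connR N (eportsL N Pl) q }

/-- `b` is a basis of the network `M`: every connection in `M` is a union of
basis connections. -/
def IsBasis {C : Type} {m : ℕ} (b : Fin m → Set C) (M : Set (Set C)) : Prop :=
  ∀ c ∈ M, ∃ S : Finset (Fin m), c = ⋃ i ∈ S, b i

/-- The dimension of a network: the size of its smallest basis. -/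
noncomputable def netDim {C : Type} (M : Set (Set C)) : ℕ :=
  sInf { m | ∃ b : Fin m → Set C, IsBasis b M }

/-- Purity of a composition `N_l ; N_r`: no transition of either component
connects to two different shared boundary ports. -/
def Pure {k n l : ℕ} (Nl : NetB k n) (Nr : NetB n l) : Prop :=
  (∀ j : Fin n, ∀ K ∈ conn Nl (bRight j), ∀ i : Fin n, bRight i ∉ K) ∧
  (∀ j : Fin n, ∀ K ∈ conn Nr (bLeft j), ∀ i : Fin n, bLeft i ∉ K)

/-! ### Wiring expressions and decompositions -/

/-- Nets with boundaries of arbitrary boundary sizes. -/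
def NetS : Type 1 := Σ (k : ℕ) (l : ℕ), NetB k l

/-- Composition on `NetS` (junk value on boundary mismatch). -/
def seqS (X Y : NetS) : NetS :=
  if h : X.2.1 = Y.1 then ⟨X.1, Y.2.1, comp (castNet rfl h X.2.2) Y.2.2⟩
  else ⟨0, 0, emptyNet⟩

def tenS (X Y : NetS) : NetS := ⟨X.1 + Y.1, X.2.1 + Y.2.1, tensor X.2.2 Y.2.2⟩

/-- Wiring expressions: binary trees with `;` and `⊗` nodes and variables at
the leaves. -/
inductive WExpr (V : Type) : Type
  | leaf : V → WExpr V
  | seq : WExpr V → WExpr V → WExpr V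
  | ten : WExpr V → WExpr V → WExpr V

/-- Semantics of a wiring expression under a variable assignment. -/
def sem {V : Type} (A : V → NetS) : WExpr V → NetS
  | .leaf x => A x
  | .seq t₁ t₂ => seqS (sem A t₁) (sem A t₂)
  | .ten t₁ t₂ => tenS (sem A t₁) (sem A t₂)

/-- Compatibility of an assignment with an expression: at each `;` node the
shared boundaries match. -/
def WT {V : Type} (A : V → NetS) : WExpr V → Prop
  | .leaf _ => True
  | .seq t₁ t₂ => WT A t₁ ∧ WT A t₂ ∧ (sem A t₁).2.1 = (sem A t₂).1
  | .ten t₁ t₂ => WT A t₁ ∧ WT A t₂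

/-- The wiring decomposition `(t, A)` has width `w`: every leaf net has
boundaries and number of places `≤ w`, and every subexpression has
boundaries `≤ w`. -/
def HasWidth {V : Type} (A : V → NetS) (w : ℕ) : WExpr V → Prop
  | .leaf x => (A x).1 ≤ w ∧ Nat.card (A x).2.2.P ≤ w ∧ (A x).2.1 ≤ w
  | .seq t₁ t₂ => HasWidth A w t₁ ∧ HasWidth A w t₂ ∧
      (sem A (.seq t₁ t₂)).1 ≤ w ∧ (sem A (.seq t₁ t₂)).2.1 ≤ w
  | .ten t₁ t₂ => HasWidth A w t₁ ∧ HasWidth A w t₂ ∧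
      (sem A (.ten t₁ t₂)).1 ≤ w ∧ (sem A (.ten t₁ t₂)).2.1 ≤ w

/-- `(t, A)` is a wiring decomposition of `N : k → l`: the assignment maps
variables to genuine nets with boundaries, is compatible with `t`, and
`⟦t⟧_A ≅ N`. -/
def IsDecompOf {V : Type} {k l : ℕ} (A : V → NetS) (t : WExpr V) (N : NetB k l) : Prop :=
  (∀ x, IsContention (A x).2.2) ∧ WT A t ∧
  ∃ (h1 : (sem A t).1 = k) (h2 : (sem A t).2.1 = l),
    Iso (castNet h1 h2 (sem A t).2.2) N

/-- A net has decomposition width `w` if it has a wiring decomposition of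
width `w`. -/
def HasDecompWidth {k l : ℕ} (N : NetB k l) (w : ℕ) : Prop :=
  ∃ (Var : Type) (A : Var → NetS) (t : WExpr Var),
    IsDecompOf A t N ∧ HasWidth A w t

/-- A pure wiring decomposition: at every `;` node the composition of the two
subexpression nets is pure. -/
def PureExpr {V : Type} (A : V → NetS) : WExpr V → Prop
  | .leaf _ => True
  | .seq t₁ t₂ => PureExpr A t₁ ∧ PureExpr A t₂ ∧
      ∀ (h : (sem A t₁).2.1 = (sem A t₂).1),
        Pure (castNet rfl h (sem A t₁).2.2) (sem A t₂).2.2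
  | .ten t₁ t₂ => PureExpr A t₁ ∧ PureExpr A t₂

/-- One step of reassociation of `;` or `⊗`, anywhere inside an expression. -/
inductive AssocStep {V : Type} : WExpr V → WExpr V → Prop
  | seqAssoc (a b c : WExpr V) : AssocStep (.seq (.seq a b) c) (.seq a (.seq b c))
  | tenAssoc (a b c : WExpr V) : AssocStep (.ten (.ten a b) c) (.ten a (.ten b c))
  | seqCongrL {a a' : WExpr V} (b : WExpr V) :
      AssocStep a a' → AssocStep (.seq a b) (.seq a' b)
  | seqCongrR (a : WExpr V) {b b' : WExpr V} :
      AssocStep b b' → AssocStep (.seq a b) (.seq a b')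
  | tenCongrL {a a' : WExpr V} (b : WExpr V) :
      AssocStep a a' → AssocStep (.ten a b) (.ten a' b)
  | tenCongrR (a : WExpr V) {b b' : WExpr V} :
      AssocStep b b' → AssocStep (.ten a b) (.ten a b')

/-- Equivalence of wiring expressions up to associativity of `;` and `⊗`. -/
def AssocEquiv {V : Type} : WExpr V → WExpr V → Prop := Relation.EqvGen AssocStep

/-! ### Concrete families of nets -/

/-- The clique net `C_n : 0 → 0`, with the minimal contention relation. -/
def clique (n : ℕ) : NetB 0 0 where
  P := Fin n
  T := {p : Fin n × Fin n // p.1 ≠ p.2}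
  finP := inferInstance
  finT := inferInstance
  pre t := {t.1.1}
  post t := {t.1.2}
  src _ := ∅
  tgt _ := ∅
  con t u := t.1.1 = u.1.1 ∨ t.1.2 = u.1.2

/-- The subset net `P_n : 0 → 0`: a place `S` (= `none`), places `[n]`, and for
each `A ⊆ [n]` a transition `S → A`; the minimal contention relation is total
since all pre-sets are `{S}`. -/
def subsetNet (n : ℕ) : NetB 0 0 where
  P := Option (Fin n)
  T := Set (Fin n)
  finP := inferInstance
  finT := inferInstance
  pre _ := {none}
  post A := some '' A
  src _ := ∅
  tgt _ := ∅
  con _ _ := True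

/-- The tree net `T_Δ^{n,k} : 0 → 0`: places are nodes of the complete n-ary
tree of depth k (lists over `Fin n` of length ≤ k); each non-leaf node has a
single transition to the set of its n children. The minimal contention
relation is equality. -/
def treeD (n k : ℕ) : NetB 0 0 where
  P := {l : List (Fin n) // l.length ≤ k}
  T := {l : List (Fin n) // l.length < k}
  finP := (List.finite_length_le (Fin n) k).to_subtype
  finT := (List.finite_length_lt (Fin n) k).to_subtype
  pre t := {⟨t.1, t.2.le⟩}
  post t := {p | ∃ i : Fin n, p.1 = t.1 ++ [i]}
  src _ := ∅
  tgt _ := ∅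
  con t u := t = u

/-- The tree net `T_Λ^{n,k} : 0 → 0`: as `T_Δ^{n,k}` but with a separate
transition from each non-leaf node to each of its children. The minimal
contention relation relates transitions with the same parent node. -/
def treeL (n k : ℕ) : NetB 0 0 where
  P := {l : List (Fin n) // l.length ≤ k}
  T := {l : List (Fin n) // l.length < k} × Fin n
  finP := (List.finite_length_le (Fin n) k).to_subtype
  finT := by
    haveI : Finite {l : List (Fin n) // l.length < k} :=
      (List.finite_length_lt (Fin n) k).to_subtype
    exact inferInstance
  pre t := {⟨t.1.1, t.1.2.le⟩}
  post t := {p | p.1 = t.1.1 ++ [t.2]}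
  src _ := ∅
  tgt _ := ∅
  con t u := t.1 = u.1

/-- The grid net `G_n : 0 → 0`: places `[n] × [n]`, a transition from each
place to its right neighbour and to its lower neighbour; the minimal
contention relation relates transitions sharing a pre-place or post-place. -/
def grid (n : ℕ) : NetB 0 0 where
  P := Fin n × Fin n
  T := {e : (Fin n × Fin n) × (Fin n × Fin n) //
        (e.2.1 = e.1.1 ∧ (e.2.2 : ℕ) = (e.1.2 : ℕ) + 1) ∨
        ((e.2.1 : ℕ) = (e.1.1 : ℕ) + 1 ∧ e.2.2 = e.1.2)}
  finP := inferInstance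
  finT := inferInstance
  pre e := {e.1.1}
  post e := {e.1.2}
  src _ := ∅
  tgt _ := ∅
  con t u := t.1.1 = u.1.1 ∨ t.1.2 = u.1.2

end NWB

namespace NWB

/-! ### Auxiliary machinery for associativity -/

theorem Sync.ext' {l m n : ℕ} {M : NetB l m} {N : NetB m n} {s s' : Sync M N}
    (h1 : s.U = s'.U) (h2 : s.V = s'.V) : s = s' := by
  cases s; cases s'; simp_all

theorem MI.mono {k l : ℕ} {A : NetB k l} {U V : Set A.T} (h : MI A V) (hUV : U ⊆ V) :
    MI A U := fun u hu v hv hc => h u (hUV hu) v (hUV hv) hc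

theorem nontriv_iff {l m n : ℕ} {M : NetB l m} {N : NetB m n} {s : Sync M N} :
    ¬ s.Trivial ↔ s.U.Nonempty ∨ s.V.Nonempty := by
  unfold Sync.Trivial
  rw [not_and_or]
  simp [Set.nonempty_iff_ne_empty]

theorem biUnion_biUnion' {α β γ : Type*} (S : Set α) (f : α → Set β) (g : β → Set γ) :
    (⋃ b ∈ ⋃ a ∈ S, f a, g b) = ⋃ a ∈ S, ⋃ b ∈ f a, g b := by
  ext x
  simp only [Set.mem_iUnion, exists_prop]
  constructor
  · rintro ⟨b, ⟨a, ha, hb⟩, hx⟩; exact ⟨a, ha, b, hb, hx⟩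
  · rintro ⟨a, ha, b, hb, hx⟩; exact ⟨b, ⟨a, ha, hb⟩, hx⟩

section TwoNets

variable {a b c : ℕ} {A : NetB a b} {B : NetB b c}

/-- Union of the `U`-components of a set of minimal synchronisations. -/
def bigU (S : Set (comp A B).T) : Set A.T := ⋃ p ∈ S, p.1.U
/-- Union of the `V`-components of a set of minimal synchronisations. -/
def bigV (S : Set (comp A B).T) : Set B.T := ⋃ p ∈ S, p.1.V

theorem subset_bigU {S : Set (comp A B).T} {p : (comp A B).T} (hp : p ∈ S) :
    p.1.U ⊆ bigU S := Set.subset_biUnion_of_mem (u := fun q => q.1.U) hp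
theorem subset_bigV {S : Set (comp A B).T} {p : (comp A B).T} (hp : p ∈ S) :
    p.1.V ⊆ bigV S := Set.subset_biUnion_of_mem (u := fun q => q.1.V) hp

theorem bigU_mono {S S' : Set (comp A B).T} (h : S ⊆ S') : bigU S ⊆ bigU S' :=
  Set.biUnion_mono h (fun _ _ => subset_rfl)
theorem bigV_mono {S S' : Set (comp A B).T} (h : S ⊆ S') : bigV S ⊆ bigV S' :=
  Set.biUnion_mono h (fun _ _ => subset_rfl)

theorem bigU_empty : bigU (∅ : Set (comp A B).T) = ∅ := by simp [bigU]
theorem bigV_empty : bigV (∅ : Set (comp A B).T) = ∅ := by simp [bigV]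

theorem eq_empty_of_big_empty {S : Set (comp A B).T}
    (hU : bigU S = ∅) (hV : bigV S = ∅) : S = ∅ := by
  ext p
  simp only [Set.mem_empty_iff_false, iff_false]
  intro hp
  rcases nontriv_iff.mp p.2.1 with ⟨u, hu⟩ | ⟨v, hv⟩
  · have := subset_bigU hp hu; rw [hU] at this; exact this
  · have := subset_bigV hp hv; rw [hV] at this; exact this

theorem mi_bigU {S : Set (comp A B).T} (hS : MI (comp A B) S) : MI A (bigU S) := by
  intro u hu v hv hcon
  simp only [bigU, Set.mem_iUnion, exists_prop] at hu hv
  obtain ⟨p, hp, hu⟩ := hu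
  obtain ⟨q, hq, hv⟩ := hv
  have hpq : p = q := hS p hp q hq (Or.inl ⟨u, hu, v, hv, hcon⟩)
  subst hpq
  exact p.1.miU u hu v hv hcon

theorem mi_bigV {S : Set (comp A B).T} (hS : MI (comp A B) S) : MI B (bigV S) := by
  intro u hu v hv hcon
  simp only [bigV, Set.mem_iUnion, exists_prop] at hu hv
  obtain ⟨p, hp, hu⟩ := hu
  obtain ⟨q, hq, hv⟩ := hv
  have hpq : p = q := hS p hp q hq (Or.inr ⟨u, hu, v, hv, hcon⟩)
  subst hpq
  exact p.1.miV u hu v hv hcon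

theorem tgt_bigU (S : Set (comp A B).T) : setTgt A (bigU S) = setSrc B (bigV S) := by
  have h1 : setTgt A (bigU S) = ⋃ p ∈ S, setTgt A p.1.U :=
    biUnion_biUnion' S (fun p => p.1.U) A.tgt
  have h2 : setSrc B (bigV S) = ⋃ p ∈ S, setSrc B p.1.V :=
    biUnion_biUnion' S (fun p => p.1.V) B.src
  rw [h1, h2]
  exact Set.iUnion₂_congr fun p _ => p.1.bd

theorem setSrc_comp (S : Set (comp A B).T) : setSrc (comp A B) S = setSrc A (bigU S) :=
  (biUnion_biUnion' S (fun p => p.1.U) A.src).symm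

theorem setTgt_comp (S : Set (comp A B).T) : setTgt (comp A B) S = setTgt B (bigV S) :=
  (biUnion_biUnion' S (fun p => p.1.V) B.tgt).symm

theorem setPre_comp (S : Set (comp A B).T) :
    setPre (comp A B) S = (Sum.inl '' setPre A (bigU S)) ∪ (Sum.inr '' setPre B (bigV S)) := by
  have h0 : setPre (comp A B) S
      = ⋃ p ∈ S, ((Sum.inl '' setPre A p.1.U) ∪ (Sum.inr '' setPre B p.1.V)) := rfl
  rw [h0]
  ext x
  simp only [setPre, bigU, bigV, Set.mem_iUnion, Set.mem_union, Set.mem_image, exists_prop]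
  constructor
  · rintro ⟨p, hp, (⟨y, ⟨u, hu, hy⟩, rfl⟩ | ⟨y, ⟨v, hv, hy⟩, rfl⟩)⟩
    · exact Or.inl ⟨y, ⟨u, ⟨p, hp, hu⟩, hy⟩, rfl⟩
    · exact Or.inr ⟨y, ⟨v, ⟨p, hp, hv⟩, hy⟩, rfl⟩
  · rintro (⟨y, ⟨u, ⟨p, hp, hu⟩, hy⟩, rfl⟩ | ⟨y, ⟨v, ⟨p, hp, hv⟩, hy⟩, rfl⟩)
    · exact ⟨p, hp, Or.inl ⟨y, ⟨u, hu, hy⟩, rfl⟩⟩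
    · exact ⟨p, hp, Or.inr ⟨y, ⟨v, hv, hy⟩, rfl⟩⟩

theorem setPost_comp (S : Set (comp A B).T) :
    setPost (comp A B) S = (Sum.inl '' setPost A (bigU S)) ∪ (Sum.inr '' setPost B (bigV S)) := by
  have h0 : setPost (comp A B) S
      = ⋃ p ∈ S, ((Sum.inl '' setPost A p.1.U) ∪ (Sum.inr '' setPost B p.1.V)) := rfl
  rw [h0]
  ext x
  simp only [setPost, bigU, bigV, Set.mem_iUnion, Set.mem_union, Set.mem_image, exists_prop]
  constructor
  · rintro ⟨p, hp, (⟨y, ⟨u, hu, hy⟩, rfl⟩ | ⟨y, ⟨v, hv, hy⟩, rfl⟩)⟩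
    · exact Or.inl ⟨y, ⟨u, ⟨p, hp, hu⟩, hy⟩, rfl⟩
    · exact Or.inr ⟨y, ⟨v, ⟨p, hp, hv⟩, hy⟩, rfl⟩
  · rintro (⟨y, ⟨u, ⟨p, hp, hu⟩, hy⟩, rfl⟩ | ⟨y, ⟨v, ⟨p, hp, hv⟩, hy⟩, rfl⟩)
    · exact ⟨p, hp, Or.inl ⟨y, ⟨u, hu, hy⟩, rfl⟩⟩
    · exact ⟨p, hp, Or.inr ⟨y, ⟨v, hv, hy⟩, rfl⟩⟩

theorem setCon_comp (S S' : Set (comp A B).T) :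
    setCon (comp A B) S S' ↔ setCon A (bigU S) (bigU S') ∨ setCon B (bigV S) (bigV S') := by
  simp only [setCon, bigU, bigV, Set.mem_iUnion, exists_prop]
  constructor
  · rintro ⟨s, hs, s', hs', h⟩
    have h' : setCon A s.1.U s'.1.U ∨ setCon B s.1.V s'.1.V := h
    rcases h' with ⟨u, hu, u', hu', hc⟩ | ⟨v, hv, v', hv', hc⟩
    · exact Or.inl ⟨u, ⟨s, hs, hu⟩, u', ⟨s', hs', hu'⟩, hc⟩
    · exact Or.inr ⟨v, ⟨s, hs, hv⟩, v', ⟨s', hs', hv'⟩, hc⟩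
  · rintro (⟨u, ⟨s, hs, hu⟩, u', ⟨s', hs', hu'⟩, hc⟩ | ⟨v, ⟨s, hs, hv⟩, v', ⟨s', hs', hv'⟩, hc⟩)
    · exact ⟨s, hs, s', hs',
        (Or.inl ⟨u, hu, u', hu', hc⟩ : setCon A s.1.U s'.1.U ∨ setCon B s.1.V s'.1.V)⟩
    · exact ⟨s, hs, s', hs',
        (Or.inr ⟨v, hv, v', hv', hc⟩ : setCon A s.1.U s'.1.U ∨ setCon B s.1.V s'.1.V)⟩

theorem setTgt_inter (hA : IsContention A) {Z U V : Set A.T} (hZ : MI A Z)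
    (hU : U ⊆ Z) (hV : V ⊆ Z) :
    setTgt A U ∩ setTgt A V = setTgt A (U ∩ V) := by
  ext x
  simp only [setTgt, Set.mem_inter_iff, Set.mem_iUnion, exists_prop]
  constructor
  · rintro ⟨⟨u, hu, hxu⟩, ⟨v, hv, hxv⟩⟩
    have huv : u = v := hZ u (hU hu) v (hV hv)
      (hA.2.2 u v (Or.inr (Or.inr (Or.inr ⟨x, hxu, hxv⟩))))
    exact ⟨u, ⟨hu, by rw [huv]; exact hv⟩, hxu⟩
  · rintro ⟨u, ⟨hu, hv⟩, hx⟩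
    exact ⟨⟨u, hu, hx⟩, ⟨u, hv, hx⟩⟩

theorem setSrc_inter (hA : IsContention A) {Z U V : Set A.T} (hZ : MI A Z)
    (hU : U ⊆ Z) (hV : V ⊆ Z) :
    setSrc A U ∩ setSrc A V = setSrc A (U ∩ V) := by
  ext x
  simp only [setSrc, Set.mem_inter_iff, Set.mem_iUnion, exists_prop]
  constructor
  · rintro ⟨⟨u, hu, hxu⟩, ⟨v, hv, hxv⟩⟩
    have huv : u = v := hZ u (hU hu) v (hV hv)
      (hA.2.2 u v (Or.inr (Or.inr (Or.inl ⟨x, hxu, hxv⟩))))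
    exact ⟨u, ⟨hu, by rw [huv]; exact hv⟩, hxu⟩
  · rintro ⟨u, ⟨hu, hv⟩, hx⟩
    exact ⟨⟨u, hu, hx⟩, ⟨u, hv, hx⟩⟩

theorem setTgt_diff (hA : IsContention A) {Z U V : Set A.T} (hZ : MI A Z)
    (hU : U ⊆ Z) (hV : V ⊆ Z) :
    setTgt A (U \ V) = setTgt A U \ setTgt A V := by
  ext x
  simp only [setTgt, Set.mem_iUnion, Set.mem_diff, exists_prop]
  constructor
  · rintro ⟨u, ⟨hu, hnv⟩, hx⟩
    refine ⟨⟨u, hu, hx⟩, ?_⟩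
    rintro ⟨v, hv, hxv⟩
    have huv : u = v := hZ u (hU hu) v (hV hv)
      (hA.2.2 u v (Or.inr (Or.inr (Or.inr ⟨x, hx, hxv⟩))))
    exact hnv (by rw [huv]; exact hv)
  · rintro ⟨⟨u, hu, hx⟩, hn⟩
    exact ⟨u, ⟨hu, fun hv => hn ⟨u, hv, hx⟩⟩, hx⟩

theorem setSrc_diff (hA : IsContention A) {Z U V : Set A.T} (hZ : MI A Z)
    (hU : U ⊆ Z) (hV : V ⊆ Z) :
    setSrc A (U \ V) = setSrc A U \ setSrc A V := by
  ext x
  simp only [setSrc, Set.mem_iUnion, Set.mem_diff, exists_prop]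
  constructor
  · rintro ⟨u, ⟨hu, hnv⟩, hx⟩
    refine ⟨⟨u, hu, hx⟩, ?_⟩
    rintro ⟨v, hv, hxv⟩
    have huv : u = v := hZ u (hU hu) v (hV hv)
      (hA.2.2 u v (Or.inr (Or.inr (Or.inl ⟨x, hx, hxv⟩))))
    exact hnv (by rw [huv]; exact hv)
  · rintro ⟨⟨u, hu, hx⟩, hn⟩
    exact ⟨u, ⟨hu, fun hv => hn ⟨u, hv, hx⟩⟩, hx⟩

/-- Block dichotomy: a sub-synchronisation cuts each minimal block entirely or not at all. -/
theorem blocks (hA : IsContention A) (hB : IsContention B)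
    {S : Set (comp A B).T} (hS : MI (comp A B) S)
    {U' : Set A.T} {V' : Set B.T} (hU' : U' ⊆ bigU S) (hV' : V' ⊆ bigV S)
    (bd' : setTgt A U' = setSrc B V') {p : (comp A B).T} (hp : p ∈ S) :
    (p.1.U ∩ U' = ∅ ∧ p.1.V ∩ V' = ∅) ∨ (p.1.U ⊆ U' ∧ p.1.V ⊆ V') := by
  have hZU : MI A (bigU S) := mi_bigU hS
  have hZV : MI B (bigV S) := mi_bigV hS
  have hpU : p.1.U ⊆ bigU S := subset_bigU hp
  have hpV : p.1.V ⊆ bigV S := subset_bigV hp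
  have bdz : setTgt A (p.1.U ∩ U') = setSrc B (p.1.V ∩ V') := by
    rw [← setTgt_inter hA hZU hpU hU', ← setSrc_inter hB hZV hpV hV', p.1.bd, bd']
  have hz : (Sync.mk (p.1.U ∩ U') (p.1.V ∩ V')
      (p.1.miU.mono Set.inter_subset_left) (p.1.miV.mono Set.inter_subset_left) bdz).Trivial
      ∨ (p.1.U ∩ U' = p.1.U ∧ p.1.V ∩ V' = p.1.V) :=
    p.2.2 _ Set.inter_subset_left Set.inter_subset_left
  rcases hz with h | h
  · exact Or.inl h
  · exact Or.inr ⟨Set.inter_eq_left.mp h.1, Set.inter_eq_left.mp h.2⟩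

/-- Uniqueness of decompositions (one inclusion). -/
theorem decomp_subset (hA : IsContention A) (hB : IsContention B)
    {S S' : Set (comp A B).T} (hS : MI (comp A B) S) (hS' : MI (comp A B) S')
    (hU : bigU S = bigU S') (hV : bigV S = bigV S') : S ⊆ S' := by
  intro p hp
  have main : ∀ q ∈ S', ((p.1.U ∩ q.1.U).Nonempty ∨ (p.1.V ∩ q.1.V).Nonempty) → p = q := by
    intro q hq hne
    have h1 := blocks hA hB hS (U' := q.1.U) (V' := q.1.V)
      (by rw [hU]; exact subset_bigU hq) (by rw [hV]; exact subset_bigV hq) q.1.bd hp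
    have h2 := blocks hA hB hS' (U' := p.1.U) (V' := p.1.V)
      (by rw [← hU]; exact subset_bigU hp) (by rw [← hV]; exact subset_bigV hp) p.1.bd hq
    rcases h1 with ⟨e1, e2⟩ | ⟨i1, i2⟩
    · rcases hne with hne | hne
      · rw [e1] at hne; exact absurd hne (by simp)
      · rw [e2] at hne; exact absurd hne (by simp)
    · rcases h2 with ⟨e1, e2⟩ | ⟨j1, j2⟩
      · rcases hne with hne | hne
        · rw [Set.inter_comm, e1] at hne; exact absurd hne (by simp)
        · rw [Set.inter_comm, e2] at hne; exact absurd hne (by simp)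
      · exact Subtype.ext (Sync.ext' (subset_antisymm i1 j1) (subset_antisymm i2 j2))
  rcases nontriv_iff.mp p.2.1 with ⟨u, hu⟩ | ⟨v, hv⟩
  · have : u ∈ bigU S' := by rw [← hU]; exact subset_bigU hp hu
    simp only [bigU, Set.mem_iUnion, exists_prop] at this
    obtain ⟨q, hq, hu'⟩ := this
    rw [main q hq (Or.inl ⟨u, hu, hu'⟩)]; exact hq
  · have : v ∈ bigV S' := by rw [← hV]; exact subset_bigV hp hv
    simp only [bigV, Set.mem_iUnion, exists_prop] at this
    obtain ⟨q, hq, hv'⟩ := this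
    rw [main q hq (Or.inr ⟨v, hv, hv'⟩)]; exact hq

theorem decomp_unique (hA : IsContention A) (hB : IsContention B)
    {S S' : Set (comp A B).T} (hS : MI (comp A B) S) (hS' : MI (comp A B) S')
    (hU : bigU S = bigU S') (hV : bigV S = bigV S') : S = S' :=
  subset_antisymm (decomp_subset hA hB hS hS' hU hV)
    (decomp_subset hA hB hS' hS hU.symm hV.symm)

theorem exists_minimal_le_aux :
    ∀ n : ℕ, ∀ s : Sync A B, s.U.ncard + s.V.ncard ≤ n → ¬ s.Trivial →
      ∃ s₀ : Sync A B, s₀.Minimal ∧ s₀.U ⊆ s.U ∧ s₀.V ⊆ s.V := by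
  haveI := A.finT; haveI := B.finT
  intro n
  induction n with
  | zero =>
    intro s hn hs
    exfalso
    exact hs ⟨(Set.ncard_eq_zero (Set.toFinite _)).mp (by omega),
      (Set.ncard_eq_zero (Set.toFinite _)).mp (by omega)⟩
  | succ n ih =>
    intro s hn hs
    by_cases hm : s.Minimal
    · exact ⟨s, hm, subset_rfl, subset_rfl⟩
    · have hex : ∃ s' : Sync A B, s'.U ⊆ s.U ∧ s'.V ⊆ s.V ∧ ¬ s'.Trivial ∧
          ¬ (s'.U = s.U ∧ s'.V = s.V) := by
        by_contra hc
        push_neg at hc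
        refine hm ⟨hs, fun s' h1 h2 => ?_⟩
        by_cases ht : s'.Trivial
        · exact Or.inl ht
        · exact Or.inr (hc s' h1 h2 ht)
      obtain ⟨s', h1, h2, h3, h4⟩ := hex
      have hle1 : s'.U.ncard ≤ s.U.ncard := Set.ncard_le_ncard h1 (Set.toFinite _)
      have hle2 : s'.V.ncard ≤ s.V.ncard := Set.ncard_le_ncard h2 (Set.toFinite _)
      have hlt : s'.U.ncard + s'.V.ncard ≤ n := by
        rcases not_and_or.mp h4 with h | h
        · have := Set.ncard_lt_ncard (ssubset_of_subset_of_ne h1 h) (Set.toFinite _)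
          omega
        · have := Set.ncard_lt_ncard (ssubset_of_subset_of_ne h2 h) (Set.toFinite _)
          omega
      obtain ⟨s₀, hmin, hu, hv⟩ := ih s' hlt h3
      exact ⟨s₀, hmin, hu.trans h1, hv.trans h2⟩

theorem decompose_aux (hA : IsContention A) (hB : IsContention B) :
    ∀ n : ℕ, ∀ s : Sync A B, s.U.ncard + s.V.ncard ≤ n →
      ∃ S : Set (comp A B).T, MI (comp A B) S ∧ bigU S = s.U ∧ bigV S = s.V := by
  haveI := A.finT; haveI := B.finT
  intro n
  induction n with
  | zero =>
    intro s hn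
    refine ⟨∅, fun u hu => absurd hu (Set.notMem_empty u), ?_, ?_⟩
    · rw [bigU_empty, (Set.ncard_eq_zero (Set.toFinite _)).mp (by omega : s.U.ncard = 0)]
    · rw [bigV_empty, (Set.ncard_eq_zero (Set.toFinite _)).mp (by omega : s.V.ncard = 0)]
  | succ n ih =>
    intro s hn
    by_cases ht : s.Trivial
    · refine ⟨∅, fun u hu => absurd hu (Set.notMem_empty u), ?_, ?_⟩
      · rw [bigU_empty, ht.1]
      · rw [bigV_empty, ht.2]
    · obtain ⟨s₀, hmin, hU0, hV0⟩ := exists_minimal_le_aux (n + 1) s hn ht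
      have bd1 : setTgt A (s.U \ s₀.U) = setSrc B (s.V \ s₀.V) := by
        rw [setTgt_diff hA s.miU subset_rfl hU0, setSrc_diff hB s.miV subset_rfl hV0,
          s.bd, s₀.bd]
      set s₁ : Sync A B := ⟨s.U \ s₀.U, s.V \ s₀.V, s.miU.mono Set.diff_subset,
        s.miV.mono Set.diff_subset, bd1⟩ with hs₁
      have hcard : s₁.U.ncard + s₁.V.ncard ≤ n := by
        have e1 : (s.U \ s₀.U).ncard = s.U.ncard - s₀.U.ncard :=
          Set.ncard_diff hU0 (Set.toFinite _)
        have e2 : (s.V \ s₀.V).ncard = s.V.ncard - s₀.V.ncard :=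
          Set.ncard_diff hV0 (Set.toFinite _)
        have hle1 : s₀.U.ncard ≤ s.U.ncard := Set.ncard_le_ncard hU0 (Set.toFinite _)
        have hle2 : s₀.V.ncard ≤ s.V.ncard := Set.ncard_le_ncard hV0 (Set.toFinite _)
        have hpos : 1 ≤ s₀.U.ncard + s₀.V.ncard := by
          rcases nontriv_iff.mp hmin.1 with h | h
          · have : 0 < s₀.U.ncard := (Set.ncard_pos (Set.toFinite _)).mpr h
            omega
          · have : 0 < s₀.V.ncard := (Set.ncard_pos (Set.toFinite _)).mpr h
            omega
        show (s.U \ s₀.U).ncard + (s.V \ s₀.V).ncard ≤ n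
        omega
      obtain ⟨S₁, hS₁, hbU, hbV⟩ := ih s₁ hcard
      have hbU' : bigU S₁ = s.U \ s₀.U := hbU
      have hbV' : bigV S₁ = s.V \ s₀.V := hbV
      refine ⟨insert ⟨s₀, hmin⟩ S₁, ?_, ?_, ?_⟩
      · have hdisjU : ∀ q ∈ S₁, ¬ setCon A s₀.U q.1.U := by
          rintro q hq ⟨u, hu, u', hu', hc⟩
          have hu'' : u' ∈ s.U \ s₀.U := by rw [← hbU']; exact subset_bigU hq hu'
          have : u = u' := s.miU u (hU0 hu) u' hu''.1 hc
          exact hu''.2 (this ▸ hu)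
        have hdisjV : ∀ q ∈ S₁, ¬ setCon B s₀.V q.1.V := by
          rintro q hq ⟨v, hv, v', hv', hc⟩
          have hv'' : v' ∈ s.V \ s₀.V := by rw [← hbV']; exact subset_bigV hq hv'
          have : v = v' := s.miV v (hV0 hv) v' hv''.1 hc
          exact hv''.2 (this ▸ hv)
        intro p hp q hq hcon
        have hcon' : setCon A p.1.U q.1.U ∨ setCon B p.1.V q.1.V := hcon
        rcases Set.mem_insert_iff.mp hp with rfl | hp'
        · rcases Set.mem_insert_iff.mp hq with rfl | hq'
          · rfl
          · exfalso
            rcases hcon' with h | h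
            · exact hdisjU q hq' h
            · exact hdisjV q hq' h
        · rcases Set.mem_insert_iff.mp hq with rfl | hq'
          · exfalso
            rcases hcon' with ⟨u, hu, u', hu', hc⟩ | ⟨v, hv, v', hv', hc⟩
            · exact hdisjU p hp' ⟨u', hu', u, hu, hA.2.1 u u' hc⟩
            · exact hdisjV p hp' ⟨v', hv', v, hv, hB.2.1 v v' hc⟩
          · exact hS₁ p hp' q hq' hcon
      · show bigU (insert ⟨s₀, hmin⟩ S₁) = s.U
        have : bigU (insert ⟨s₀, hmin⟩ S₁) = s₀.U ∪ bigU S₁ := Set.biUnion_insert _ _ _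
        rw [this, hbU', Set.union_diff_cancel hU0]
      · show bigV (insert ⟨s₀, hmin⟩ S₁) = s.V
        have : bigV (insert ⟨s₀, hmin⟩ S₁) = s₀.V ∪ bigV S₁ := Set.biUnion_insert _ _ _
        rw [this, hbV', Set.union_diff_cancel hV0]

theorem decompose (hA : IsContention A) (hB : IsContention B) (s : Sync A B) :
    ∃ S : Set (comp A B).T, MI (comp A B) S ∧ bigU S = s.U ∧ bigV S = s.V := by
  haveI := A.finT; haveI := B.finT
  exact decompose_aux hA hB _ s le_rfl

end TwoNets

section Triples

variable {k l m n : ℕ} {M : NetB k l} {N : NetB l m} {O : NetB m n}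

/-- A synchronisation across two boundaries. -/
structure Triple (M : NetB k l) (N : NetB l m) (O : NetB m n) where
  U : Set M.T
  V : Set N.T
  W : Set O.T
  miU : MI M U
  miV : MI N V
  miW : MI O W
  bd1 : setTgt M U = setSrc N V
  bd2 : setTgt N V = setSrc O W

theorem Triple.ext' {z z' : Triple M N O} (h1 : z.U = z'.U) (h2 : z.V = z'.V)
    (h3 : z.W = z'.W) : z = z' := by
  cases z; cases z'; simp_all

def Triple.Trivial (z : Triple M N O) : Prop := z.U = ∅ ∧ z.V = ∅ ∧ z.W = ∅

def Triple.Minimal (z : Triple M N O) : Prop :=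
  ¬ z.Trivial ∧ ∀ z' : Triple M N O, z'.U ⊆ z.U → z'.V ⊆ z.V → z'.W ⊆ z.W →
    z'.Trivial ∨ (z'.U = z.U ∧ z'.V = z.V ∧ z'.W = z.W)

/-- The triple associated to a transition of `(M ; N) ; O`. -/
def tripL (t : (comp (comp M N) O).T) : Triple M N O where
  U := bigU t.1.U
  V := bigV t.1.U
  W := t.1.V
  miU := mi_bigU t.1.miU
  miV := mi_bigV t.1.miU
  miW := t.1.miV
  bd1 := tgt_bigU t.1.U
  bd2 := (setTgt_comp t.1.U).symm.trans t.1.bd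

/-- The triple associated to a transition of `M ; (N ; O)`. -/
def tripR (t : (comp M (comp N O)).T) : Triple M N O where
  U := t.1.U
  V := bigU t.1.V
  W := bigV t.1.V
  miU := t.1.miU
  miV := mi_bigU t.1.miV
  miW := mi_bigV t.1.miV
  bd1 := t.1.bd.trans (setSrc_comp t.1.V)
  bd2 := tgt_bigU t.1.V

theorem tripL_minimal (hM : IsContention M) (hN : IsContention N)
    (t : (comp (comp M N) O).T) : (tripL t).Minimal := by
  constructor
  · rintro ⟨h1, h2, h3⟩
    exact t.2.1 ⟨eq_empty_of_big_empty h1 h2, h3⟩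
  · intro z hU' hV' hW'
    have hblk := fun (p : (comp M N).T) (hp : p ∈ t.1.U) =>
      blocks hM hN t.1.miU (U' := z.U) (V' := z.V) hU' hV' z.bd1 hp
    set S' : Set (comp M N).T := {p ∈ t.1.U | p.1.U ⊆ z.U ∧ p.1.V ⊆ z.V} with hS'def
    have hbU : bigU S' = z.U := by
      apply subset_antisymm
      · intro u hu
        simp only [bigU, Set.mem_iUnion, exists_prop] at hu
        obtain ⟨p, hp, hu⟩ := hu
        exact hp.2.1 hu
      · intro u hu
        have hu' : u ∈ bigU t.1.U := hU' hu
        simp only [bigU, Set.mem_iUnion, exists_prop] at hu' ⊢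
        obtain ⟨p, hp, hup⟩ := hu'
        rcases hblk p hp with ⟨e1, _⟩ | ⟨i1, i2⟩
        · exact absurd (Set.mem_inter hup hu) (by rw [e1]; exact Set.notMem_empty u)
        · exact ⟨p, ⟨hp, i1, i2⟩, hup⟩
    have hbV : bigV S' = z.V := by
      apply subset_antisymm
      · intro v hv
        simp only [bigV, Set.mem_iUnion, exists_prop] at hv
        obtain ⟨p, hp, hv⟩ := hv
        exact hp.2.2 hv
      · intro v hv
        have hv' : v ∈ bigV t.1.U := hV' hv
        simp only [bigV, Set.mem_iUnion, exists_prop] at hv' ⊢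
        obtain ⟨p, hp, hvp⟩ := hv'
        rcases hblk p hp with ⟨_, e2⟩ | ⟨i1, i2⟩
        · exact absurd (Set.mem_inter hvp hv) (by rw [e2]; exact Set.notMem_empty v)
        · exact ⟨p, ⟨hp, i1, i2⟩, hvp⟩
    have bd'' : setTgt (comp M N) S' = setSrc O z.W := by
      rw [setTgt_comp, hbV, z.bd2]
    have hmin := t.2.2 ⟨S', z.W, t.1.miU.mono (Set.sep_subset _ _), z.miW, bd''⟩
      (Set.sep_subset _ _) hW'
    rcases hmin with ⟨e1, e2⟩ | ⟨e1, e2⟩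
    · left
      refine ⟨?_, ?_, e2⟩
      · rw [← hbU, show S' = ∅ from e1]; exact bigU_empty
      · rw [← hbV, show S' = ∅ from e1]; exact bigV_empty
    · right
      refine ⟨?_, ?_, e2⟩
      · rw [← hbU, show S' = t.1.U from e1]; rfl
      · rw [← hbV, show S' = t.1.U from e1]; rfl

theorem tripR_minimal (hN : IsContention N) (hO : IsContention O)
    (t : (comp M (comp N O)).T) : (tripR t).Minimal := by
  constructor
  · rintro ⟨h1, h2, h3⟩
    exact t.2.1 ⟨h1, eq_empty_of_big_empty h2 h3⟩
  · intro z hU' hV' hW'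
    have hblk := fun (q : (comp N O).T) (hq : q ∈ t.1.V) =>
      blocks hN hO t.1.miV (U' := z.V) (V' := z.W) hV' hW' z.bd2 hq
    set S' : Set (comp N O).T := {q ∈ t.1.V | q.1.U ⊆ z.V ∧ q.1.V ⊆ z.W} with hS'def
    have hbU : bigU S' = z.V := by
      apply subset_antisymm
      · intro u hu
        simp only [bigU, Set.mem_iUnion, exists_prop] at hu
        obtain ⟨q, hq, hu⟩ := hu
        exact hq.2.1 hu
      · intro u hu
        have hu' : u ∈ bigU t.1.V := hV' hu
        simp only [bigU, Set.mem_iUnion, exists_prop] at hu' ⊢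
        obtain ⟨q, hq, huq⟩ := hu'
        rcases hblk q hq with ⟨e1, _⟩ | ⟨i1, i2⟩
        · exact absurd (Set.mem_inter huq hu) (by rw [e1]; exact Set.notMem_empty u)
        · exact ⟨q, ⟨hq, i1, i2⟩, huq⟩
    have hbV : bigV S' = z.W := by
      apply subset_antisymm
      · intro v hv
        simp only [bigV, Set.mem_iUnion, exists_prop] at hv
        obtain ⟨q, hq, hv⟩ := hv
        exact hq.2.2 hv
      · intro v hv
        have hv' : v ∈ bigV t.1.V := hW' hv
        simp only [bigV, Set.mem_iUnion, exists_prop] at hv' ⊢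
        obtain ⟨q, hq, hvq⟩ := hv'
        rcases hblk q hq with ⟨_, e2⟩ | ⟨i1, i2⟩
        · exact absurd (Set.mem_inter hvq hv) (by rw [e2]; exact Set.notMem_empty v)
        · exact ⟨q, ⟨hq, i1, i2⟩, hvq⟩
    have bd'' : setTgt M z.U = setSrc (comp N O) S' := by
      rw [setSrc_comp, hbU, z.bd1]
    have hmin := t.2.2 ⟨z.U, S', z.miU, t.1.miV.mono (Set.sep_subset _ _), bd''⟩
      hU' (Set.sep_subset _ _)
    rcases hmin with ⟨e1, e2⟩ | ⟨e1, e2⟩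
    · left
      refine ⟨e1, ?_, ?_⟩
      · rw [← hbU, show S' = ∅ from e2]; exact bigU_empty
      · rw [← hbV, show S' = ∅ from e2]; exact bigV_empty
    · right
      refine ⟨e1, ?_, ?_⟩
      · rw [← hbU, show S' = t.1.V from e2]; rfl
      · rw [← hbV, show S' = t.1.V from e2]; rfl

theorem tripL_bijective (hM : IsContention M) (hN : IsContention N) :
    Function.Bijective (fun t : (comp (comp M N) O).T =>
      (⟨tripL t, tripL_minimal hM hN t⟩ : {z : Triple M N O // z.Minimal})) := by
  constructor
  · intro t t' h
    have h1 : bigU t.1.U = bigU t'.1.U := congrArg (fun z => z.1.U) h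
    have h2 : bigV t.1.U = bigV t'.1.U := congrArg (fun z => z.1.V) h
    have h3 : t.1.V = t'.1.V := congrArg (fun z => z.1.W) h
    exact Subtype.ext (Sync.ext' (decomp_unique hM hN t.1.miU t'.1.miU h1 h2) h3)
  · rintro ⟨z, hz⟩
    obtain ⟨S, hS, hbU, hbV⟩ := decompose hM hN ⟨z.U, z.V, z.miU, z.miV, z.bd1⟩
    have hbU : bigU S = z.U := hbU
    have hbV : bigV S = z.V := hbV
    have bd2 : setTgt (comp M N) S = setSrc O z.W := by
      rw [setTgt_comp, hbV, z.bd2]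
    set s₂ : Sync (comp M N) O := ⟨S, z.W, hS, z.miW, bd2⟩ with hs₂
    have hmin : s₂.Minimal := by
      constructor
      · rintro ⟨h1, h2⟩
        refine hz.1 ⟨?_, ?_, h2⟩
        · rw [← hbU, show S = ∅ from h1]; exact bigU_empty
        · rw [← hbV, show S = ∅ from h1]; exact bigV_empty
      · intro s' hsU hsV
        have hz' := hz.2 ⟨bigU s'.U, bigV s'.U, s'.V, mi_bigU s'.miU, mi_bigV s'.miU,
          s'.miV, tgt_bigU s'.U, (setTgt_comp s'.U).symm.trans s'.bd⟩
          (by rw [← hbU]; exact bigU_mono hsU) (by rw [← hbV]; exact bigV_mono hsU) hsV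
        rcases hz' with ⟨e1, e2, e3⟩ | ⟨e1, e2, e3⟩
        · exact Or.inl ⟨eq_empty_of_big_empty e1 e2, e3⟩
        · refine Or.inr ⟨?_, e3⟩
          exact decomp_unique hM hN s'.miU hS
            (by rw [show bigU s'.U = z.U from e1, ← hbU])
            (by rw [show bigV s'.U = z.V from e2, ← hbV])
    refine ⟨⟨s₂, hmin⟩, ?_⟩
    exact Subtype.ext (Triple.ext' hbU hbV rfl)

theorem tripR_bijective (hN : IsContention N) (hO : IsContention O) :
    Function.Bijective (fun t : (comp M (comp N O)).T =>
      (⟨tripR t, tripR_minimal hN hO t⟩ : {z : Triple M N O // z.Minimal})) := by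
  constructor
  · intro t t' h
    have h1 : t.1.U = t'.1.U := congrArg (fun z => z.1.U) h
    have h2 : bigU t.1.V = bigU t'.1.V := congrArg (fun z => z.1.V) h
    have h3 : bigV t.1.V = bigV t'.1.V := congrArg (fun z => z.1.W) h
    exact Subtype.ext (Sync.ext' h1 (decomp_unique hN hO t.1.miV t'.1.miV h2 h3))
  · rintro ⟨z, hz⟩
    obtain ⟨S, hS, hbU, hbV⟩ := decompose hN hO ⟨z.V, z.W, z.miV, z.miW, z.bd2⟩
    have hbU : bigU S = z.V := hbU
    have hbV : bigV S = z.W := hbV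
    have bd1 : setTgt M z.U = setSrc (comp N O) S := by
      rw [setSrc_comp, hbU, z.bd1]
    set s₂ : Sync M (comp N O) := ⟨z.U, S, z.miU, hS, bd1⟩ with hs₂
    have hmin : s₂.Minimal := by
      constructor
      · rintro ⟨h1, h2⟩
        refine hz.1 ⟨h1, ?_, ?_⟩
        · rw [← hbU, show S = ∅ from h2]; exact bigU_empty
        · rw [← hbV, show S = ∅ from h2]; exact bigV_empty
      · intro s' hsU hsV
        have hz' := hz.2 ⟨s'.U, bigU s'.V, bigV s'.V, s'.miU, mi_bigU s'.miV,
          mi_bigV s'.miV, s'.bd.trans (setSrc_comp s'.V), tgt_bigU s'.V⟩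
          hsU (by rw [← hbU]; exact bigU_mono hsV) (by rw [← hbV]; exact bigV_mono hsV)
        rcases hz' with ⟨e1, e2, e3⟩ | ⟨e1, e2, e3⟩
        · exact Or.inl ⟨e1, eq_empty_of_big_empty e2 e3⟩
        · refine Or.inr ⟨e1, ?_⟩
          exact decomp_unique hN hO s'.miV hS
            (by rw [show bigU s'.V = z.V from e2, ← hbU])
            (by rw [show bigV s'.V = z.W from e3, ← hbV])
    refine ⟨⟨s₂, hmin⟩, ?_⟩
    exact Subtype.ext (Triple.ext' rfl hbU hbV)

end Triples



/-- composition along a common boundary is associative up to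
isomorphism: `(M ; N) ; O ≅ M ; (N ; O)`. -/
theorem comp_assoc {k l m n : ℕ} (M : NetB k l) (N : NetB l m) (O : NetB m n)
    (hM : IsContention M) (hN : IsContention N) (hO : IsContention O) :
    Iso (comp (comp M N) O) (comp M (comp N O)) := by
  classical
  let eqL : (comp (comp M N) O).T ≃ {z : Triple M N O // z.Minimal} :=
    Equiv.ofBijective _ (tripL_bijective hM hN)
  let eqR : (comp M (comp N O)).T ≃ {z : Triple M N O // z.Minimal} :=
    Equiv.ofBijective _ (tripR_bijective hN hO)
  let et := eqL.trans eqR.symm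
  have key : ∀ t, tripR (et t) = tripL t := fun t =>
    congrArg Subtype.val (eqR.apply_symm_apply (eqL t))
  have hU : ∀ t, (et t).1.U = bigU t.1.U := fun t => congrArg Triple.U (key t)
  have hV : ∀ t, bigU (et t).1.V = bigV t.1.U := fun t => congrArg Triple.V (key t)
  have hW : ∀ t, bigV (et t).1.V = t.1.V := fun t => congrArg Triple.W (key t)
  refine ⟨⟨Equiv.sumAssoc M.P N.P O.P, et, ?_, ?_, ?_, ?_, ?_⟩⟩
  · intro t
    show (Sum.inl '' setPre M (et t).1.U) ∪ (Sum.inr '' setPre (comp N O) (et t).1.V)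
      = (Equiv.sumAssoc M.P N.P O.P) ''
        ((Sum.inl '' setPre (comp M N) t.1.U) ∪ (Sum.inr '' setPre O t.1.V))
    rw [hU t, setPre_comp, setPre_comp, hV t, hW t]
    simp [Set.image_union, Set.image_image, Set.union_assoc]
    erw [Set.image_union, Set.image_image, Set.image_image]
    rfl
  · intro t
    show (Sum.inl '' setPost M (et t).1.U) ∪ (Sum.inr '' setPost (comp N O) (et t).1.V)
      = (Equiv.sumAssoc M.P N.P O.P) ''
        ((Sum.inl '' setPost (comp M N) t.1.U) ∪ (Sum.inr '' setPost O t.1.V))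
    rw [hU t, setPost_comp, setPost_comp, hV t, hW t]
    simp [Set.image_union, Set.image_image, Set.union_assoc]
    erw [Set.image_union, Set.image_image, Set.image_image]
    rfl
  · intro t
    show setSrc M (et t).1.U = setSrc (comp M N) t.1.U
    rw [hU t, setSrc_comp]
  · intro t
    show setTgt (comp N O) (et t).1.V = setTgt O t.1.V
    rw [setTgt_comp, hW t]
  · intro t u
    show (setCon M (et t).1.U (et u).1.U ∨ setCon (comp N O) (et t).1.V (et u).1.V)
      ↔ (setCon (comp M N) t.1.U u.1.U ∨ setCon O t.1.V u.1.V)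
    rw [hU t, hU u, setCon_comp, setCon_comp, hV t, hV u, hW t, hW u]
    tauto

end NWB
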